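/- In a strongly continuous domain L, the strong way-below relation satisfies the interpolation property: for all x, y ∈ L, x ≪_s y implies there exists z ∈ L with x ≪_s z ≪_s y. -/
import Mathlib


open Set

variable {L : Type*}

/-- A directed subset: nonempty and directed under `≤`. -/
def DirSet [Preorder L] (D : Set L) : Prop := D.Nonempty ∧ DirectedOn (· ≤ ·) D

/-- Strongly Scott open sets (the family `σ^s(L)`). -/
def StronglyScottOpen [Preorder L] [SupSet L] (U : Set L) : Prop :=
  IsUpperSet U ∧ ∀ D : Set L, DirSet D → ∀ x : L,
    Ici (sSup D) ∩ Ici x ⊆ U → ∃ d ∈ D, Ici d ∩ Ici x ⊆ U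

/-- The strong Scott topology `σ_s(L)`, generated by the strongly Scott open sets. -/
def strongScott (L : Type*) [Preorder L] [SupSet L] : TopologicalSpace L :=
  TopologicalSpace.generateFrom {U | StronglyScottOpen U}

/-- Scott open sets. -/
def ScottOpen [Preorder L] [SupSet L] (U : Set L) : Prop :=
  IsUpperSet U ∧ ∀ D : Set L, DirSet D → sSup D ∈ U → (D ∩ U).Nonempty

/-- The Scott topology `σ(L)`. -/
def scottTop (L : Type*) [Preorder L] [SupSet L] : TopologicalSpace L :=
  TopologicalSpace.generateFrom {U | ScottOpen U}

/-- The upper topology `υ(L)`. -/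
def upperTop (L : Type*) [Preorder L] : TopologicalSpace L :=
  TopologicalSpace.generateFrom {U | ∃ x : L, U = (Iic x)ᶜ}

/-- The lower topology `ω(L)`. -/
def lowerTop (L : Type*) [Preorder L] : TopologicalSpace L :=
  TopologicalSpace.generateFrom {U | ∃ x : L, U = (Ici x)ᶜ}

/-- The strong way-below relation `x ≪_s y`. -/
def SWayBelow [Preorder L] (x y : L) : Prop :=
  ∀ D : Set L, DirSet D → ∀ a : L,
    (⋂ d ∈ D, Ici d) ∩ Ici a ⊆ Ici y → ∃ d ∈ D, Ici d ∩ Ici a ⊆ Ici x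

/-- The way-below relation `x ≪ y`. -/
def WayBelow [Preorder L] [SupSet L] (x y : L) : Prop :=
  ∀ D : Set L, DirSet D → y ≤ sSup D → ∃ d ∈ D, x ≤ d

/-- `X` with topology `t` is a C-space (w.r.t. the order of `L`). -/
def IsCSpace [Preorder L] (t : TopologicalSpace L) : Prop :=
  ∀ U : Set L, @IsOpen _ (t) U → ∀ x ∈ U, ∃ y ∈ U,
    x ∈ @interior L t (Ici y) ∧ Ici y ⊆ U

/-- `L` is a strongly continuous domain. -/
def StronglyContinuousDomain (L : Type*) [Preorder L] [SupSet L] : Prop :=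
  IsCSpace (strongScott L)

/-- `L` is a continuous domain. -/
def ContinuousDomain (L : Type*) [Preorder L] [SupSet L] : Prop :=
  ∀ x : L, DirSet {y | WayBelow y x} ∧ IsLUB {y | WayBelow y x} x

/-- `L` is a hypercontinuous domain. -/
def HypercontinuousDomain (L : Type*) [Preorder L] : Prop :=
  ∀ x : L, DirSet {y | x ∈ @interior L (upperTop L) (Ici y)} ∧
    IsLUB {y | x ∈ @interior L (upperTop L) (Ici y)} x

/-- The strong Lawson topology `λ_s(L)`: common refinement of `σ_s(L)` and `ω(L)`. -/
def strongLawson (L : Type*) [Preorder L] [SupSet L] : TopologicalSpace L :=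
  TopologicalSpace.generateFrom
    {U | @IsOpen _ (strongScott L) U ∨ @IsOpen _ (lowerTop L) U}

lemma sso_univ [Preorder L] [SupSet L] : StronglyScottOpen (univ : Set L) := by
  refine ⟨isUpperSet_univ, fun D hD x _ => ?_⟩
  obtain ⟨d, hd⟩ := hD.1
  exact ⟨d, hd, by simp⟩

lemma sso_inter [Preorder L] [SupSet L] {U V : Set L} (hU : StronglyScottOpen U)
    (hV : StronglyScottOpen V) : StronglyScottOpen (U ∩ V) := by
  refine ⟨hU.1.inter hV.1, fun D hD x h => ?_⟩
  obtain ⟨d1, hd1, h1⟩ := hU.2 D hD x (h.trans inter_subset_left)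
  obtain ⟨d2, hd2, h2⟩ := hV.2 D hD x (h.trans inter_subset_right)
  obtain ⟨d, hd, hd1d, hd2d⟩ := hD.2 d1 hd1 d2 hd2
  exact ⟨d, hd, fun z hz => ⟨h1 ⟨le_trans hd1d hz.1, hz.2⟩, h2 ⟨le_trans hd2d hz.1, hz.2⟩⟩⟩

/-- Every strong-Scott open set is a union of basic strongly Scott open sets. -/
lemma exists_sso_of_mem_open [Preorder L] [SupSet L] {V : Set L}
    (hV : @IsOpen _ (strongScott L) V) {y : L} (hy : y ∈ V) :
    ∃ U, StronglyScottOpen U ∧ y ∈ U ∧ U ⊆ V := by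
  have hV' : TopologicalSpace.GenerateOpen {U | StronglyScottOpen U} V := hV
  clear hV
  induction hV' with
  | basic U hU => exact ⟨U, hU, hy, subset_rfl⟩
  | univ => exact ⟨univ, sso_univ, trivial, subset_rfl⟩
  | inter U1 U2 h1 h2 ih1 ih2 =>
    obtain ⟨W1, hW1, hyW1, hW1s⟩ := ih1 hy.1
    obtain ⟨W2, hW2, hyW2, hW2s⟩ := ih2 hy.2
    exact ⟨W1 ∩ W2, sso_inter hW1 hW2, ⟨hyW1, hyW2⟩, inter_subset_inter hW1s hW2s⟩
  | sUnion S hS ih =>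
    obtain ⟨U, hU, hyU⟩ := hy
    obtain ⟨W, hW, hyW, hWs⟩ := ih U hU hyU
    exact ⟨W, hW, hyW, hWs.trans (subset_sUnion_of_mem hU)⟩

/-- If `z` lies in a strongly Scott open set contained in `↑x`, then `x ≪_s z`. -/
lemma sWayBelow_of_sso [CompletePartialOrder L] {U : Set L} (hU : StronglyScottOpen U)
    {x z : L} (hz : z ∈ U) (hsub : U ⊆ Ici x) : SWayBelow x z := by
  intro D hD a h
  have hlub : IsLUB D (sSup D) := CompletePartialOrder.lubOfDirected D hD.2
  have h' : Ici (sSup D) ∩ Ici a ⊆ U := by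
    intro c hc
    have hmem : c ∈ (⋂ d ∈ D, Ici d) ∩ Ici a :=
      ⟨mem_iInter₂.mpr (fun d hd => (hlub.1 hd).trans hc.1), hc.2⟩
    exact hU.1 (h hmem) hz
  obtain ⟨d, hd, hsub'⟩ := hU.2 D hD a h'
  exact ⟨d, hd, hsub'.trans hsub⟩

/-- Complements of principal lower sets are strongly Scott open. -/
lemma sso_compl_Iic [CompletePartialOrder L] (b : L) :
    StronglyScottOpen ((Iic b)ᶜ : Set L) := by
  constructor
  · intro u v huv hu
    simp only [mem_compl_iff, mem_Iic] at *
    exact fun h => hu (huv.trans h)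
  · intro D hD a h
    by_contra hcon
    push_neg at hcon
    have hb : ∀ d ∈ D, d ≤ b ∧ a ≤ b := by
      intro d hd
      obtain ⟨z, hz, hz2⟩ := not_subset.mp (hcon d hd)
      simp only [mem_compl_iff, mem_Iic, not_not] at hz2
      exact ⟨hz.1.trans hz2, hz.2.trans hz2⟩
    have hlub : IsLUB D (sSup D) := CompletePartialOrder.lubOfDirected D hD.2
    obtain ⟨d0, hd0⟩ := hD.1
    have hbmem : b ∈ Ici (sSup D) ∩ Ici a :=
      ⟨hlub.2 (fun d hd => (hb d hd).1), (hb d0 hd0).2⟩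
    exact h hbmem le_rfl

theorem sWayBelow_interpolation [CompletePartialOrder L]
    (hL : StronglyContinuousDomain L) {x y : L} (hxy : SWayBelow x y) :
    ∃ z : L, SWayBelow x z ∧ SWayBelow z y := by
  letI t : TopologicalSpace L := strongScott L
  set N : Set L := {w : L | y ∈ @interior L (strongScott L) (Ici w)} with hN
  -- N is nonempty
  obtain ⟨w0, _, hw0int, _⟩ := hL univ isOpen_univ y trivial
  have hw0 : w0 ∈ N := hw0int
  -- N is directed
  have hdir : DirectedOn (· ≤ ·) N := by
    intro w1 h1 w2 h2
    have hopen : @IsOpen _ (strongScott L) (interior (Ici w1) ∩ interior (Ici w2)) :=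
      isOpen_interior.inter isOpen_interior
    obtain ⟨w, hwU, hwint, hwsub⟩ := hL _ hopen y ⟨h1, h2⟩
    exact ⟨w, hwint, interior_subset hwU.1, interior_subset hwU.2⟩
  have hNdir : DirSet N := ⟨⟨w0, hw0⟩, hdir⟩
  -- y is below every upper bound of N
  have hub : ∀ b : L, (∀ w ∈ N, w ≤ b) → y ≤ b := by
    intro b hb
    by_contra hyb
    have hopen : @IsOpen _ (strongScott L) ((Iic b)ᶜ) :=
      TopologicalSpace.GenerateOpen.basic _ (sso_compl_Iic b)
    obtain ⟨w, hwU, hwint, hwsub⟩ := hL _ hopen y hyb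
    have : b ∈ (Iic b)ᶜ := hwsub (hb w hwint)
    exact this le_rfl
  -- apply `hxy` to the directed set `N`
  have hpre : (⋂ d ∈ N, Ici d) ∩ Ici w0 ⊆ Ici y := by
    intro c hc
    exact hub c (fun w hw => mem_iInter₂.mp hc.1 w hw)
  obtain ⟨w1, hw1, hw1sub⟩ := hxy N hNdir w0 hpre
  obtain ⟨w2, hw2, hw1w2, hw0w2⟩ := hdir w1 hw1 w0 hw0
  have hw2sub : Ici w2 ⊆ Ici x := fun c hc =>
    hw1sub ⟨le_trans hw1w2 hc, le_trans hw0w2 hc⟩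
  -- find the interpolant inside `interior (Ici w2)`
  have hw2' : y ∈ interior (Ici w2) := hw2
  obtain ⟨z, hzU, hzint, hzsub⟩ := hL (interior (Ici w2)) isOpen_interior y hw2'
  refine ⟨z, ?_, ?_⟩
  · obtain ⟨U, hU, hzU', hUsub⟩ := exists_sso_of_mem_open isOpen_interior hzU
    exact sWayBelow_of_sso hU hzU' (hUsub.trans (interior_subset.trans hw2sub))
  · obtain ⟨V, hV, hyV, hVsub⟩ := exists_sso_of_mem_open isOpen_interior hzint
    exact sWayBelow_of_sso hV hyV (hVsub.trans interior_subset)
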